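/- For γ > 0, the identity log(1+γ) = max over α ≥ 0 of [log(1+α) − α + (1+α)γ/(1+γ)] holds, with the maximum attained at α = γ. -/

import Mathlib

theorem fp_lagrangian_dual_transform (γ : ℝ) (hγ : 0 < γ) :
    (∀ α : ℝ, 0 ≤ α →
        Real.log (1 + α) - α + (1 + α) * γ / (1 + γ) ≤ Real.log (1 + γ)) ∧
      Real.log (1 + γ) - γ + (1 + γ) * γ / (1 + γ) = Real.log (1 + γ) := by
  have h1γ : (0:ℝ) < 1 + γ := by linarith
  constructor
  · intro α hα
    have h1α : (0:ℝ) < 1 + α := by linarith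
    have hlog : Real.log ((1+α)/(1+γ)) ≤ (1+α)/(1+γ) - 1 :=
      Real.log_le_sub_one_of_pos (by positivity)
    rw [Real.log_div (ne_of_gt h1α) (ne_of_gt h1γ)] at hlog
    have heq : (1+α)*γ/(1+γ) = (1+α) - (1+α)/(1+γ) := by
      field_simp; ring
    rw [heq]; linarith
  · field_simp; ring
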